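/- In Lemma 'Witness Protection': consider a randomized procedure that, starting from state ρ₀, picks t uniformly from {1,…,T} and applies t measurements, each chosen uniformly from {E₁,…,E_m}, halting with failure if any rejects. Let p_t be the probability that all t iterations succeed, and β_u = max_i (1 - Tr(E_i ρ_u)) where ρ_u is the state after u successful iterations. Then p_t ≤ ∏_{u<t} (1 - β_u/m), and consequently for any z > 0, Σ_{t : β_t > z} p_t ≤ m/z. -/

import Mathlib

open Matrix
open scoped ComplexOrder

namespace WPaux
variable {n : Type*} [Fintype n] [DecidableEq n]

lemma trace_nonneg {A : Matrix n n ℂ} (hA : A.PosSemidef) : 0 ≤ A.trace := by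
  rw [Matrix.trace]
  apply Finset.sum_nonneg
  intro i _
  exact hA.diag_nonneg

lemma trace_eq_re {A : Matrix n n ℂ} (hA : A.PosSemidef) : A.trace = (A.trace.re : ℂ) := by
  have h := trace_nonneg hA
  rw [Complex.le_def] at h
  apply Complex.ext <;> simp [← h.2]

open scoped MatrixOrder in
lemma trace_mul_nonneg {A B : Matrix n n ℂ} (hA : A.PosSemidef) (hB : B.PosSemidef) :
    0 ≤ (A * B).trace := by
  have h1 : A * B = A * (CFC.sqrt B * CFC.sqrt B) := by
    rw [CFC.sqrt_mul_sqrt_self B (Matrix.nonneg_iff_posSemidef.mpr hB)]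
  rw [h1, ← mul_assoc, Matrix.trace_mul_cycle]
  apply trace_nonneg
  have := hA.mul_mul_conjTranspose_same (CFC.sqrt B)
  rwa [(Matrix.nonneg_iff_posSemidef.mp (CFC.sqrt_nonneg B)).isHermitian.eq] at this

lemma trace_mul_re_nonneg {A B : Matrix n n ℂ} (hA : A.PosSemidef) (hB : B.PosSemidef) :
    0 ≤ ((A * B).trace).re :=
  by simpa using (Complex.le_def.mp (trace_mul_nonneg hA hB)).1

lemma smul_psd {c : ℝ} (hc : 0 ≤ c) {A : Matrix n n ℂ} (hA : A.PosSemidef) :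
    ((c : ℂ) • A).PosSemidef := by
  constructor
  · unfold Matrix.IsHermitian
    rw [Matrix.conjTranspose_smul, hA.1.eq]
    congr 1
    simp
  · intro x
    exact (hA.smul (a := (c:ℂ)) (by exact_mod_cast hc)).2 x

end WPaux

set_option maxHeartbeats 2000000 in
/-- Witness Protection Lemma, combinatorial core.  A procedure starts from the
density matrix `ρ₀` and at each step applies a measurement chosen uniformly
from `E₁, …, E_m`, halting on rejection.  With `Sᵢ = √Eᵢ`, the unnormalized
state after `t` successful iterations (averaged over the measurement choices)
is `σ t`, with `σ 0 = ρ₀` and `σ (t+1) = (1/m) Σᵢ Sᵢ (σ t) Sᵢ`; the success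
probability of `t` iterations is `p t = Tr(σ t)` and
`β t = maxᵢ (1 - Tr(Eᵢ ρ_t))` with `ρ_t = σ t / Tr(σ t)`.  Then
`p t ≤ ∏_{u<t} (1 - β u / m)` and, for every `z > 0`,
`Σ_{t : β t > z} p t ≤ m / z`. -/
theorem witness_protection_sum_bound {d m : ℕ} (hm : 0 < m)
    (ρ₀ : Matrix (Fin d) (Fin d) ℂ)
    (hρ₀ : ρ₀.PosSemidef ∧ ρ₀.trace = 1)
    (E S : Fin m → Matrix (Fin d) (Fin d) ℂ)
    (hE : ∀ i, (E i).PosSemidef ∧ (1 - E i).PosSemidef)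
    (hS : ∀ i, (S i).PosSemidef ∧ S i * S i = E i)
    (σ : ℕ → Matrix (Fin d) (Fin d) ℂ)
    (hσ0 : σ 0 = ρ₀)
    (hσ : ∀ t, σ (t + 1) = (m : ℂ)⁻¹ • ∑ i, S i * σ t * S i)
    (p β : ℕ → ℝ)
    (hp : ∀ t, p t = ((σ t).trace).re)
    (hβ : ∀ t, IsGreatest
      {x : ℝ | ∃ i : Fin m,
        x = 1 - ((E i * (((σ t).trace)⁻¹ • σ t)).trace).re} (β t)) :
    (∀ t, p t ≤ ∏ u ∈ Finset.range t, (1 - β u / m)) ∧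
    (∀ z : ℝ, 0 < z → ∀ A : Finset ℕ, (∀ t ∈ A, z < β t) →
      ∑ t ∈ A, p t ≤ m / z) := by
  obtain ⟨hρ₀psd, hρ₀tr⟩ := hρ₀
  have hm1 : (1:ℝ) ≤ (m:ℝ) := by exact_mod_cast hm
  have hmpos : (0:ℝ) < (m:ℝ) := by positivity
  -- positivity of σ t
  have hpsd : ∀ t, (σ t).PosSemidef := by
    intro t
    induction t with
    | zero => rwa [hσ0]
    | succ t ih =>
      rw [hσ t]
      have hinv : ((m : ℂ))⁻¹ = (((m:ℝ)⁻¹ : ℝ) : ℂ) := by push_cast; ring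
      rw [hinv]
      refine WPaux.smul_psd (by positivity) ?_
      apply Finset.sum_induction _ Matrix.PosSemidef
        (fun a b ha hb => ha.add hb) Matrix.PosSemidef.zero
      intro i _
      have h := ih.mul_mul_conjTranspose_same (S i)
      rwa [(hS i).1.isHermitian.eq] at h
  have hp0 : ∀ t, 0 ≤ p t := by
    intro t
    rw [hp]
    simpa using (Complex.le_def.mp (WPaux.trace_nonneg (hpsd t))).1
  have htr : ∀ t, (σ t).trace = ((p t : ℝ) : ℂ) := by
    intro t; rw [hp]; exact WPaux.trace_eq_re (hpsd t)
  -- ρ t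
  have hρeq : ∀ t, ((σ t).trace)⁻¹ • σ t = (((p t)⁻¹ : ℝ) : ℂ) • σ t := by
    intro t
    rw [htr t, Complex.ofReal_inv]
  have hρpsd : ∀ t, (((σ t).trace)⁻¹ • σ t).PosSemidef := by
    intro t
    rw [hρeq t]
    exact WPaux.smul_psd (inv_nonneg.mpr (hp0 t)) (hpsd t)
  -- trace of ρ t
  have htrρ : ∀ t, (((((σ t).trace)⁻¹ • σ t)).trace).re ≤ 1 := by
    intro t
    rw [hρeq t, Matrix.trace_smul, htr t, smul_eq_mul, ← Complex.ofReal_mul,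
      Complex.ofReal_re]
    rcases eq_or_ne (p t) 0 with h | h
    · simp [h]
    · rw [inv_mul_cancel₀ h]
  -- bounds on the measurement expectations on ρ
  have hxge0 : ∀ t i, 0 ≤ ((E i * (((σ t).trace)⁻¹ • σ t)).trace).re := fun t i =>
    WPaux.trace_mul_re_nonneg (hE i).1 (hρpsd t)
  have hxle1 : ∀ t i, ((E i * (((σ t).trace)⁻¹ • σ t)).trace).re ≤ 1 := by
    intro t i
    have h := WPaux.trace_mul_re_nonneg (hE i).2 (hρpsd t)
    have e : (1 - E i) * (((σ t).trace)⁻¹ • σ t)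
        = (((σ t).trace)⁻¹ • σ t) - E i * (((σ t).trace)⁻¹ • σ t) := by rw [sub_mul, one_mul]
    rw [e, Matrix.trace_sub, Complex.sub_re] at h
    linarith [htrρ t]
  -- bounds on β
  have hβle1 : ∀ t, β t ≤ 1 := by
    intro t
    obtain ⟨i, hi⟩ := (hβ t).1
    rw [hi]
    linarith [hxge0 t i]
  have hβge0 : ∀ t, 0 ≤ β t := by
    intro t
    have h := (hβ t).2 ⟨⟨0, hm⟩, rfl⟩
    linarith [hxle1 t ⟨0, hm⟩]
  have hfac : ∀ t, 0 ≤ 1 - β t / m := by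
    intro t
    have : β t / m ≤ 1 := by
      rw [div_le_one hmpos]
      linarith [hβle1 t]
    linarith
  -- trace of E i σ t is at most p t
  have hqle : ∀ t i, ((E i * σ t).trace).re ≤ p t := by
    intro t i
    have h := WPaux.trace_mul_re_nonneg (hE i).2 (hpsd t)
    have e : (1 - E i) * σ t = σ t - E i * σ t := by rw [sub_mul, one_mul]
    rw [e, Matrix.trace_sub, Complex.sub_re] at h
    rw [hp]
    linarith
  -- step formula
  have hstepeq : ∀ t, p (t+1) = (m:ℝ)⁻¹ * ∑ i, ((E i * σ t).trace).re := by
    intro t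
    rw [hp, hσ t, Matrix.trace_smul]
    have hterm : ∀ i : Fin m, (S i * σ t * S i).trace = (E i * σ t).trace := by
      intro i
      rw [Matrix.trace_mul_cycle, (hS i).2]
    rw [Matrix.trace_sum, Finset.sum_congr rfl (fun i _ => hterm i)]
    have hinv : ((m : ℂ))⁻¹ = (((m:ℝ)⁻¹ : ℝ) : ℂ) := by push_cast; ring
    rw [hinv, smul_eq_mul, Complex.re_ofReal_mul]
    congr 1
    exact Complex.re_sum _ _
  -- the key step inequality
  have hstep : ∀ t, p (t+1) ≤ (1 - β t / m) * p t := by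
    intro t
    rcases eq_or_ne (p t) 0 with h0 | h0
    · rw [h0, mul_zero, hstepeq t]
      have hsum : ∑ i, ((E i * σ t).trace).re ≤ 0 :=
        Finset.sum_nonpos (fun i _ => (hqle t i).trans_eq h0)
      have hminv : (0:ℝ) ≤ (m:ℝ)⁻¹ := by positivity
      nlinarith
    · -- p t > 0 : σ t = p t • ρ t
      have hppos : 0 < p t := lt_of_le_of_ne (hp0 t) (Ne.symm h0)
      have hσρ : σ t = ((p t : ℝ) : ℂ) • (((σ t).trace)⁻¹ • σ t) := by
        rw [hρeq t, smul_smul, ← Complex.ofReal_mul, mul_inv_cancel₀ h0]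
        simp
      have hq : ∀ i : Fin m, ((E i * σ t).trace).re
          = p t * ((E i * (((σ t).trace)⁻¹ • σ t)).trace).re := by
        intro i
        conv_lhs => rw [hσρ]
        rw [Matrix.mul_smul, Matrix.trace_smul, smul_eq_mul, Complex.re_ofReal_mul]
      obtain ⟨i₀, hi₀⟩ := (hβ t).1
      have hsumx : β t ≤ ∑ i, (1 - ((E i * (((σ t).trace)⁻¹ • σ t)).trace).re) := by
        rw [hi₀]
        exact Finset.single_le_sum
          (f := fun i => 1 - ((E i * (((σ t).trace)⁻¹ • σ t)).trace).re)
          (fun i _ => by linarith [hxle1 t i]) (Finset.mem_univ i₀)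
      have hsum : ∑ i, ((E i * (((σ t).trace)⁻¹ • σ t)).trace).re ≤ (m:ℝ) - β t := by
        have e : ∑ i : Fin m, (1 - ((E i * (((σ t).trace)⁻¹ • σ t)).trace).re)
            = (m:ℝ) - ∑ i, ((E i * (((σ t).trace)⁻¹ • σ t)).trace).re := by
          rw [Finset.sum_sub_distrib]
          simp
        rw [e] at hsumx
        linarith
      rw [hstepeq t, Finset.sum_congr rfl (fun i _ => hq i), ← Finset.mul_sum]
      calc (m:ℝ)⁻¹ * (p t * ∑ i, ((E i * (((σ t).trace)⁻¹ • σ t)).trace).re)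
          ≤ (m:ℝ)⁻¹ * (p t * ((m:ℝ) - β t)) := by
            apply mul_le_mul_of_nonneg_left _ (by positivity)
            exact mul_le_mul_of_nonneg_left hsum (le_of_lt hppos)
        _ = (1 - β t / m) * p t := by field_simp
  -- part 1
  have hpart1 : ∀ t, p t ≤ ∏ u ∈ Finset.range t, (1 - β u / m) := by
    intro t
    induction t with
    | zero => rw [hp, hσ0, hρ₀tr]; simp
    | succ t ih =>
      rw [Finset.prod_range_succ]
      calc p (t+1) ≤ (1 - β t / m) * p t := hstep t
        _ ≤ (1 - β t / m) * ∏ u ∈ Finset.range t, (1 - β u / m) :=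
            mul_le_mul_of_nonneg_left ih (hfac t)
        _ = (∏ u ∈ Finset.range t, (1 - β u / m)) * (1 - β t / m) := mul_comm _ _
  refine ⟨hpart1, ?_⟩
  -- part 2
  intro z hz A hA
  rcases A.eq_empty_or_nonempty with rfl | ⟨t₀, ht₀⟩
  · simp
    positivity
  · have hz1 : z < 1 := lt_of_lt_of_le (hA t₀ ht₀) (hβle1 t₀)
    set r : ℝ := 1 - z / m with hrdef
    have hzm : 0 < z / m := by positivity
    have hzm1 : z / m < 1 := by
      have : z / m ≤ z := by
        rw [div_le_iff₀ hmpos]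
        nlinarith
      linarith
    have hr0 : 0 ≤ r := by rw [hrdef]; linarith
    have hr1 : r < 1 := by rw [hrdef]; linarith
    set c : ℕ → ℕ := fun t => (A.filter (· < t)).card with hcdef
    have hbound : ∀ t ∈ A, p t ≤ r ^ (c t) := by
      intro t ht
      have hsub : (Finset.range t).filter (· ∈ A) ⊆ Finset.range t :=
        Finset.filter_subset _ _
      have hfle1 : ∀ u, 1 - β u / m ≤ 1 := by
        intro u
        have h1 : 0 ≤ β u / m := div_nonneg (hβge0 u) hmpos.le
        linarith
      calc p t ≤ ∏ u ∈ Finset.range t, (1 - β u / m) := hpart1 t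
        _ ≤ ∏ u ∈ (Finset.range t).filter (· ∈ A), (1 - β u / m) := by
            rw [← Finset.prod_sdiff hsub]
            have h1 : ∏ u ∈ Finset.range t \ (Finset.range t).filter (· ∈ A),
                (1 - β u / m) ≤ 1 :=
              Finset.prod_le_one (fun u _ => hfac u) (fun u _ => hfle1 u)
            have h2 : 0 ≤ ∏ u ∈ (Finset.range t).filter (· ∈ A), (1 - β u / m) :=
              Finset.prod_nonneg (fun u _ => hfac u)
            nlinarith
        _ ≤ ∏ u ∈ (Finset.range t).filter (· ∈ A), r := by
            apply Finset.prod_le_prod (fun u _ => hfac u)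
            intro u hu
            rw [Finset.mem_filter] at hu
            have hzu := hA u hu.2
            rw [hrdef]
            have : z / m ≤ β u / m := by gcongr
            linarith
        _ = r ^ (c t) := by
            have hfeq : (Finset.range t).filter (· ∈ A) = A.filter (· < t) := by
              ext u
              simp only [Finset.mem_filter, Finset.mem_range]
              tauto
            rw [Finset.prod_const, hfeq, hcdef]
    have hcmono : ∀ s ∈ A, ∀ t ∈ A, s < t → c s < c t := by
      intro s hs t ht hst
      apply Finset.card_lt_card
      have hsub : A.filter (· < s) ⊆ A.filter (· < t) := by
        intro a ha
        rw [Finset.mem_filter] at ha ⊢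
        exact ⟨ha.1, lt_trans ha.2 hst⟩
      rw [Finset.ssubset_iff_of_subset hsub]
      exact ⟨s, Finset.mem_filter.mpr ⟨hs, hst⟩, fun h => by
        simpa using (Finset.mem_filter.mp h).2⟩
    have hinj : ∀ x ∈ A, ∀ y ∈ A, c x = c y → x = y := by
      intro x hx y hy hxy
      rcases lt_trichotomy x y with h | h | h
      · exact absurd hxy (ne_of_lt (hcmono x hx y hy h))
      · exact h
      · exact absurd hxy.symm (ne_of_lt (hcmono y hy x hx h))
    have himg : ∀ t ∈ A, c t < A.card := by
      intro t ht
      apply Finset.card_lt_card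
      rw [Finset.ssubset_iff_of_subset (Finset.filter_subset _ _)]
      exact ⟨t, ht, fun h => by simpa using (Finset.mem_filter.mp h).2⟩
    have h1r : 0 < 1 - r := by linarith
    calc ∑ t ∈ A, p t ≤ ∑ t ∈ A, r ^ (c t) := Finset.sum_le_sum hbound
      _ = ∑ k ∈ A.image c, r ^ k := (Finset.sum_image hinj).symm
      _ ≤ ∑ k ∈ Finset.range A.card, r ^ k := by
          apply Finset.sum_le_sum_of_subset_of_nonneg
          · intro k hk
            rw [Finset.mem_image] at hk
            obtain ⟨t, ht, rfl⟩ := hk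
            exact Finset.mem_range.mpr (himg t ht)
          · intro k _ _
            positivity
      _ ≤ 1 / (1 - r) := by
          rw [geom_sum_eq (ne_of_lt hr1)]
          have e : (r ^ A.card - 1)/(r - 1) = (1 - r ^ A.card)/(1 - r) := by
            rw [← neg_div_neg_eq]
            ring_nf
          rw [e, div_le_div_iff₀ h1r h1r]
          have hps : 0 ≤ r ^ A.card := pow_nonneg hr0 _
          nlinarith
      _ = m / z := by
          rw [show (1:ℝ) - r = z / m from by rw [hrdef]; ring, one_div_div]
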